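/- Let $A: \prod_{\ell=1}^L L_2(\Omega_\ell,\gamma_\ell) \to L_2(\Omega_A)^G$ be the atmospheric tomography operator $(A\phi)_g(r) = \sum_{\ell=1}^L \phi_\ell(c_{\ell,g} r + \alpha_g h_\ell)$, where $c_{\ell,g}\in(0,1]$, $\alpha_g\in\mathbb{R}^2$, $h_\ell\ge 0$, and $\Omega_A(\alpha_g h_\ell) = \{r : (r-\alpha_g h_\ell)/c_{\ell,g} \in \Omega_A\} \subset \Omega_\ell$. Then the Hilbert-space adjoint of $A$ is given by $(A^*\varphi)_\ell(r) = \sum_{g=1}^G \frac{\gamma_\ell}{c_{\ell,g}^2}\,\varphi_g\!\left(\frac{r-\alpha_g h_\ell}{c_{\ell,g}}\right) I_{\Omega_A(\alpha_g h_\ell)}(r)$. -/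

import Mathlib

open MeasureTheory Measure Set

namespace AtmTomoAux

lemma memLp_conj {α : Type*} [MeasurableSpace α] {μ : Measure α} {p : ENNReal} {f : α → ℂ}
    (hf : MemLp f p μ) : MemLp (fun x => (starRingEnd ℂ) (f x)) p μ :=
  ⟨Complex.continuous_conj.comp_aestronglyMeasurable hf.1, by
    have heq : eLpNorm (fun x => (starRingEnd ℂ) (f x)) p μ = eLpNorm f p μ :=
      eLpNorm_congr_norm_ae (Filter.Eventually.of_forall fun x => by simp)
    rw [heq]; exact hf.2⟩

noncomputable def affEq (k : ℝ) (hk : k ≠ 0) (b : ℝ × ℝ) : (ℝ × ℝ) ≃ᵐ (ℝ × ℝ) :=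
  ((Homeomorph.smulOfNeZero k hk).trans (Homeomorph.addRight b)).toMeasurableEquiv

lemma affEq_apply (k : ℝ) (hk : k ≠ 0) (b : ℝ × ℝ) (x : ℝ × ℝ) :
    affEq k hk b x = k • x + b := rfl

lemma affEmbedding (k : ℝ) (hk : k ≠ 0) (b : ℝ × ℝ) :
    MeasurableEmbedding (fun x : ℝ × ℝ => k • x + b) :=
  (affEq k hk b).measurableEmbedding

lemma map_aff (k : ℝ) (hk : 0 < k) (b : ℝ × ℝ) :
    Measure.map (fun x : ℝ × ℝ => k • x + b) volume
      = ENNReal.ofReal ((k ^ 2)⁻¹) • volume := by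
  have h1 : (fun x : ℝ × ℝ => k • x + b) = (fun x => x + b) ∘ (fun x : ℝ × ℝ => k • x) := rfl
  rw [h1, ← Measure.map_map (measurable_add_const b) (measurable_const_smul k)]
  rw [show (fun x : ℝ × ℝ => k • x) = (k • ·) from rfl, map_addHaar_smul volume hk.ne']
  rw [Measure.map_smul, map_add_right_eq_self]
  congr 1
  rw [Module.finrank_prod, Module.finrank_self]
  rw [abs_of_nonneg (by positivity)]

lemma restrict_eq (k : ℝ) (hk : 0 < k) (b : ℝ × ℝ) {s : Set (ℝ × ℝ)} (hs : MeasurableSet s) :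
    volume.restrict s = ENNReal.ofReal (k ^ 2) •
      (volume.restrict ((fun x : ℝ × ℝ => k • x + b) ⁻¹' s)).map (fun x => k • x + b) := by
  have hT : Measurable (fun x : ℝ × ℝ => k • x + b) := (measurable_const_smul k).add_const b
  rw [← Measure.restrict_map hT hs, map_aff k hk b, Measure.restrict_smul, smul_smul,
    ← ENNReal.ofReal_mul (by positivity), mul_inv_cancel₀ (by positivity), ENNReal.ofReal_one,
    one_smul]

lemma setIntegral_change (k : ℝ) (hk : 0 < k) (b : ℝ × ℝ) {s : Set (ℝ × ℝ)}
    (hs : MeasurableSet s) (F : ℝ × ℝ → ℂ) :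
    ∫ r in s, F r = ((k ^ 2 : ℝ) : ℂ) *
      ∫ r in (fun x : ℝ × ℝ => k • x + b) ⁻¹' s, F (k • r + b) := by
  rw [restrict_eq k hk b hs, integral_smul_measure, (affEmbedding k hk.ne' b).integral_map,
    ENNReal.toReal_ofReal (by positivity), Complex.real_smul]

lemma memLp_change (k : ℝ) (hk : 0 < k) (b : ℝ × ℝ) {s : Set (ℝ × ℝ)}
    (hs : MeasurableSet s) {F : ℝ × ℝ → ℂ} (hF : MemLp F 2 (volume.restrict s)) :
    MemLp (fun x => F (k • x + b)) 2
      (volume.restrict ((fun x : ℝ × ℝ => k • x + b) ⁻¹' s)) := by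
  have hT : Measurable (fun x : ℝ × ℝ => k • x + b) := (measurable_const_smul k).add_const b
  have hmap : (volume.restrict ((fun x : ℝ × ℝ => k • x + b) ⁻¹' s)).map (fun x => k • x + b)
      = ENNReal.ofReal ((k ^ 2)⁻¹) • volume.restrict s := by
    rw [← Measure.restrict_map hT hs, map_aff k hk b, Measure.restrict_smul]
  have h1 : MemLp F 2 ((volume.restrict ((fun x : ℝ × ℝ => k • x + b) ⁻¹' s)).map
      (fun x => k • x + b)) := by
    rw [hmap]; exact hF.smul_measure ENNReal.ofReal_ne_top
  exact ((affEmbedding k hk.ne' b).memLp_map_measure_iff).mp h1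

lemma integrable_change (k : ℝ) (hk : 0 < k) (b : ℝ × ℝ) {s : Set (ℝ × ℝ)}
    (hs : MeasurableSet s) {F : ℝ × ℝ → ℂ}
    (hF : Integrable (fun x => F (k • x + b))
      (volume.restrict ((fun x : ℝ × ℝ => k • x + b) ⁻¹' s))) :
    Integrable F (volume.restrict s) := by
  rw [restrict_eq k hk b hs,
    integrable_smul_measure (by simp [ENNReal.ofReal_eq_zero]; positivity) ENNReal.ofReal_ne_top,
    (affEmbedding k hk.ne' b).integrable_map_iff]
  exact hF

end AtmTomoAux

open AtmTomoAux

/-- the Hilbert-space adjoint of the atmospheric tomography operator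
`(Aφ)_g(r) = ∑_ℓ φ_ℓ(c_{ℓg} r + α_g h_ℓ)` from `∏_ℓ L₂(Ω_ℓ, γ_ℓ)` to `L₂(Ω_A)^G` is
`(A*ψ)_ℓ(r) = ∑_g (γ_ℓ/c_{ℓg}²) ψ_g((r - α_g h_ℓ)/c_{ℓg}) I_{Ω_A(α_g h_ℓ)}(r)`,
expressed via the defining adjoint identity `⟨Aφ, ψ⟩ = ⟨φ, A*ψ⟩`. -/
theorem atmospheric_tomography_adjoint
    (L G : ℕ) (γ : Fin L → ℝ) (hγ : ∀ l, 0 < γ l)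
    (c : Fin L → Fin G → ℝ) (hc : ∀ l g, 0 < c l g ∧ c l g ≤ 1)
    (α : Fin G → ℝ × ℝ) (h : Fin L → ℝ) (hh : ∀ l, 0 ≤ h l)
    (ΩA : Set (ℝ × ℝ)) (hΩA : MeasurableSet ΩA)
    -- the shifted/scaled aperture domains Ω_A(α_g h_ℓ)
    (DA : Fin L → Fin G → Set (ℝ × ℝ))
    (hDA : ∀ l g, DA l g = {r : ℝ × ℝ | (c l g)⁻¹ • (r - h l • α g) ∈ ΩA})
    -- the layer domains Ω_ℓ
    (Ωl : Fin L → Set (ℝ × ℝ)) (hΩl : ∀ l, Ωl l = ⋃ g : Fin G, DA l g)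
    -- the adjoint candidate A*ψ
    (Astar : (Fin G → ℝ × ℝ → ℂ) → Fin L → ℝ × ℝ → ℂ)
    (hAstar : ∀ (ψ : Fin G → ℝ × ℝ → ℂ) (l : Fin L) (r : ℝ × ℝ),
      Astar ψ l r = ∑ g : Fin G,
        ((γ l / (c l g) ^ 2 : ℝ) : ℂ) * ψ g ((c l g)⁻¹ • (r - h l • α g)) *
          Set.indicator (DA l g) (fun _ => (1 : ℂ)) r) :
    ∀ (φ : Fin L → ℝ × ℝ → ℂ) (ψ : Fin G → ℝ × ℝ → ℂ),
      (∀ l, MemLp (φ l) 2 (volume.restrict (Ωl l))) →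
      (∀ g, MemLp (ψ g) 2 (volume.restrict ΩA)) →
      -- ⟨Aφ, ψ⟩_{L₂(Ω_A)^G} = ⟨φ, A*ψ⟩_{∏ L₂(Ω_ℓ, γ_ℓ)}
      (∑ g : Fin G, ∫ r in ΩA,
          (∑ l : Fin L, φ l (c l g • r + h l • α g)) * (starRingEnd ℂ) (ψ g r)) =
        ∑ l : Fin L, (1 / γ l : ℂ) *
          ∫ r in Ωl l, φ l r * (starRingEnd ℂ) (Astar ψ l r) := by
  intro φ ψ hφ hψ
  have hkpos : ∀ l g, (0:ℝ) < c l g := fun l g => (hc l g).1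
  have hkne : ∀ l g, c l g ≠ 0 := fun l g => (hkpos l g).ne'
  have hpre : ∀ l g, (fun x : ℝ × ℝ => c l g • x + h l • α g) ⁻¹' (DA l g) = ΩA := by
    intro l g; ext x
    simp [hDA, Set.mem_preimage, add_sub_cancel_right, inv_smul_smul₀ (hkne l g)]
  have hDAm : ∀ l g, MeasurableSet (DA l g) := by
    intro l g; rw [hDA]
    exact ((measurable_id.sub_const (h l • α g)).const_smul ((c l g)⁻¹)) hΩA
  have hsub : ∀ l g, DA l g ⊆ Ωl l := fun l g => (hΩl l) ▸ Set.subset_iUnion (DA l) g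
  -- integrability of the basic integrand
  have hIntg : ∀ l g, Integrable
      (fun r => φ l (c l g • r + h l • α g) * (starRingEnd ℂ) (ψ g r))
      (volume.restrict ΩA) := by
    intro l g
    have h1 : MemLp (fun r : ℝ × ℝ => φ l (c l g • r + h l • α g)) 2 (volume.restrict ΩA) := by
      have := memLp_change (c l g) (hkpos l g) (h l • α g) (hDAm l g)
        ((hφ l).mono_measure (Measure.restrict_mono (hsub l g) le_rfl))
      rwa [hpre l g] at this
    have h2 : MemLp (fun r => (starRingEnd ℂ) (ψ g r)) 2 (volume.restrict ΩA) :=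
      memLp_conj (hψ g)
    have h3 : MemLp ((fun r : ℝ × ℝ => φ l (c l g • r + h l • α g)) •
        (fun r => (starRingEnd ℂ) (ψ g r))) 1 (volume.restrict ΩA) :=
      h2.smul h1 (hpqr := ⟨by simp [ENNReal.inv_two_add_inv_two, one_div]⟩)
    have h4 := memLp_one_iff_integrable.mp h3
    simpa [Pi.smul_apply', smul_eq_mul, Pi.mul_def] using h4
  -- the common double sum value
  set I : Fin L → Fin G → ℂ := fun l g =>
    ∫ r in ΩA, φ l (c l g • r + h l • α g) * (starRingEnd ℂ) (ψ g r) with hI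
  -- LHS
  have hL : ∀ g, (∫ r in ΩA,
      (∑ l : Fin L, φ l (c l g • r + h l • α g)) * (starRingEnd ℂ) (ψ g r))
      = ∑ l : Fin L, I l g := by
    intro g
    rw [show (fun r : ℝ × ℝ => (∑ l : Fin L, φ l (c l g • r + h l • α g)) *
        (starRingEnd ℂ) (ψ g r)) = fun r : ℝ × ℝ =>
        ∑ l : Fin L, φ l (c l g • r + h l • α g) * (starRingEnd ℂ) (ψ g r) from
      funext fun r => Finset.sum_mul ..]
    exact integral_finset_sum _ (fun l _ => hIntg l g)
  -- RHS
  have hR : ∀ l, (∫ r in Ωl l, φ l r * (starRingEnd ℂ) (Astar ψ l r))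
      = ∑ g : Fin G, (γ l : ℂ) * I l g := by
    intro l
    have hstep : ∀ r : ℝ × ℝ, φ l r * (starRingEnd ℂ) (Astar ψ l r)
        = ∑ g : Fin G, ((γ l / (c l g) ^ 2 : ℝ) : ℂ) *
            Set.indicator (DA l g)
              (fun r' => φ l r' * (starRingEnd ℂ) (ψ g ((c l g)⁻¹ • (r' - h l • α g)))) r := by
      intro r
      rw [hAstar, _root_.map_sum, Finset.mul_sum]
      refine Finset.sum_congr rfl fun g _ => ?_
      by_cases hr : r ∈ DA l g
      · simp only [Set.indicator_of_mem hr, map_mul, Complex.conj_ofReal, mul_one, map_one]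
        ring
      · simp [Set.indicator_of_notMem hr]
    have hIndInt : ∀ g : Fin G, Integrable
        (Set.indicator (DA l g)
          (fun r' => φ l r' * (starRingEnd ℂ) (ψ g ((c l g)⁻¹ • (r' - h l • α g)))))
        (volume.restrict (Ωl l)) := by
      intro g
      rw [integrable_indicator_iff (hDAm l g)]
      have : IntegrableOn
          (fun r' => φ l r' * (starRingEnd ℂ) (ψ g ((c l g)⁻¹ • (r' - h l • α g))))
          (DA l g) volume := by
        apply integrable_change (c l g) (hkpos l g) (h l • α g) (hDAm l g)
        rw [hpre l g]
        have := hIntg l g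
        refine this.congr (Filter.Eventually.of_forall fun x => ?_)
        simp [add_sub_cancel_right, inv_smul_smul₀ (hkne l g)]
      rw [IntegrableOn, Measure.restrict_restrict (hDAm l g),
        Set.inter_eq_left.mpr (hsub l g)]
      exact this
    calc (∫ r in Ωl l, φ l r * (starRingEnd ℂ) (Astar ψ l r))
        = ∫ r in Ωl l, ∑ g : Fin G, ((γ l / (c l g) ^ 2 : ℝ) : ℂ) *
            Set.indicator (DA l g)
              (fun r' => φ l r' * (starRingEnd ℂ) (ψ g ((c l g)⁻¹ • (r' - h l • α g)))) r := by
          exact integral_congr_ae (Filter.Eventually.of_forall fun r => hstep r)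
      _ = ∑ g : Fin G, ∫ r in Ωl l, ((γ l / (c l g) ^ 2 : ℝ) : ℂ) *
            Set.indicator (DA l g)
              (fun r' => φ l r' * (starRingEnd ℂ) (ψ g ((c l g)⁻¹ • (r' - h l • α g)))) r :=
          integral_finset_sum _ (fun g _ => (hIndInt g).const_mul _)
      _ = ∑ g : Fin G, (γ l : ℂ) * I l g := by
          refine Finset.sum_congr rfl fun g _ => ?_
          rw [integral_const_mul, setIntegral_indicator (hDAm l g),
            Set.inter_eq_right.mpr (hsub l g)]
          rw [setIntegral_change (c l g) (hkpos l g) (h l • α g) (hDAm l g), hpre l g]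
          have hfun : (fun r : ℝ × ℝ => φ l (c l g • r + h l • α g) *
              (starRingEnd ℂ) (ψ g ((c l g)⁻¹ • (c l g • r + h l • α g - h l • α g))))
              = fun r : ℝ × ℝ => φ l (c l g • r + h l • α g) * (starRingEnd ℂ) (ψ g r) := by
            funext r; simp [add_sub_cancel_right, inv_smul_smul₀ (hkne l g)]
          rw [hfun, ← mul_assoc, hI]
          congr 1
          have : ((c l g : ℝ) : ℂ) ≠ 0 := Complex.ofReal_ne_zero.mpr (hkne l g)
          push_cast
          field_simp
  -- conclude
  simp_rw [hL, hR]
  rw [Finset.sum_comm]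
  refine Finset.sum_congr rfl fun l _ => ?_
  rw [Finset.mul_sum]
  refine Finset.sum_congr rfl fun g _ => ?_
  rw [← mul_assoc, one_div, inv_mul_cancel₀ (Complex.ofReal_ne_zero.mpr (hγ l).ne'), one_mul]
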